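/- (Hurwitz transitivity for the symmetric group) Let n ≥ 2 and let c be an n-cycle in S_n. The Hurwitz action of the braid group B_{n−1} on the set of reduced factorizations of c into n−1 transpositions is transitive. Concretely: any tuple (t_1,…,t_{n−1}) of transpositions with product c can be transformed into any other such tuple by a sequence of moves, where a move replaces adjacent entries (t_i, t_{i+1}) by (t_i t_{i+1} t_i⁻¹, t_i) or by (t_{i+1}, t_{i+1}⁻¹ t_i t_{i+1}). -/

import Mathlib

/-- One Hurwitz move on a tuple: replace adjacent entries `(a, b)` by
`(a b a⁻¹, a)` or by `(b, b⁻¹ a b)`. -/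
def HurwitzStep {G : Type*} [Group G] (l l' : List G) : Prop :=
  ∃ (l₁ : List G) (a b : G) (l₂ : List G),
    l = l₁ ++ a :: b :: l₂ ∧
    (l' = l₁ ++ (a * b * a⁻¹) :: a :: l₂ ∨
     l' = l₁ ++ b :: (b⁻¹ * a * b) :: l₂)

section GroupLemmas

variable {G : Type*} [Group G]

theorem HurwitzStep.symm {l l' : List G} (h : HurwitzStep l l') : HurwitzStep l' l := by
  obtain ⟨l₁, a, b, l₂, rfl, rfl | rfl⟩ := h
  · refine ⟨l₁, a * b * a⁻¹, a, l₂, rfl, Or.inr ?_⟩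
    have : a⁻¹ * (a * b * a⁻¹) * a = b := by group
    rw [this]
  · refine ⟨l₁, b, b⁻¹ * a * b, l₂, rfl, Or.inl ?_⟩
    have : b * (b⁻¹ * a * b) * b⁻¹ = a := by group
    rw [this]

theorem HurwitzStep.prod_eq {l l' : List G} (h : HurwitzStep l l') : l.prod = l'.prod := by
  obtain ⟨l₁, a, b, l₂, rfl, rfl | rfl⟩ := h <;> simp [mul_assoc]

theorem HurwitzStep.length_eq {l l' : List G} (h : HurwitzStep l l') :
    l.length = l'.length := by
  obtain ⟨l₁, a, b, l₂, rfl, rfl | rfl⟩ := h <;> simp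

theorem HurwitzStep.cons (a : G) {l l' : List G} (h : HurwitzStep l l') :
    HurwitzStep (a :: l) (a :: l') := by
  obtain ⟨l₁, x, y, l₂, rfl, rfl | rfl⟩ := h
  · exact ⟨a :: l₁, x, y, l₂, rfl, Or.inl rfl⟩
  · exact ⟨a :: l₁, x, y, l₂, rfl, Or.inr rfl⟩

theorem rtg_cons (a : G) {l l' : List G} (h : Relation.ReflTransGen HurwitzStep l l') :
    Relation.ReflTransGen HurwitzStep (a :: l) (a :: l') :=
  Relation.ReflTransGen.lift (a :: ·) (fun _ _ hs => hs.cons a) _ _ h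

theorem rtg_symm {l l' : List G} (h : Relation.ReflTransGen HurwitzStep l l') :
    Relation.ReflTransGen HurwitzStep l' l :=
  haveI : Std.Symm (@HurwitzStep G _) := ⟨fun _ _ hs => hs.symm⟩
  Std.Symm.symm _ _ h

theorem rtg_prod {l l' : List G} (h : Relation.ReflTransGen HurwitzStep l l') :
    l.prod = l'.prod := by
  induction h with
  | refl => rfl
  | tail _ h ih => exact ih.trans h.prod_eq

theorem rtg_length {l l' : List G} (h : Relation.ReflTransGen HurwitzStep l l') :
    l.length = l'.length := by
  induction h with
  | refl => rfl
  | tail _ h ih => exact ih.trans h.length_eq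

end GroupLemmas

section PermLemmas

open Equiv Equiv.Perm

variable {α : Type*} [DecidableEq α] [Fintype α]

theorem isSwap_conj {g t : Equiv.Perm α} (h : t.IsSwap) : (g * t * g⁻¹).IsSwap := by
  obtain ⟨u, v, huv, rfl⟩ := h
  exact ⟨g u, g v, fun h' => huv (g.injective h'), (Equiv.swap_apply_apply g u v).symm⟩

theorem hstep_swaps {l l' : List (Equiv.Perm α)} (h : HurwitzStep l l')
    (hl : ∀ t ∈ l, t.IsSwap) : ∀ t ∈ l', t.IsSwap := by
  obtain ⟨l₁, a, b, l₂, rfl, rfl | rfl⟩ := h <;> intro t ht <;>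
    rw [List.mem_append, List.mem_cons, List.mem_cons] at ht
  · rcases ht with h1 | heq | heq | h2
    · exact hl t (by simp [h1])
    · exact heq ▸ isSwap_conj (hl b (by simp))
    · exact heq ▸ hl a (by simp)
    · exact hl t (by simp [h2])
  · rcases ht with h1 | heq | heq | h2
    · exact hl t (by simp [h1])
    · exact heq ▸ hl b (by simp)
    · have h3 := isSwap_conj (g := b⁻¹) (hl a (by simp))
      rw [inv_inv] at h3
      exact heq ▸ h3
    · exact hl t (by simp [h2])

theorem rtg_swaps {l l' : List (Equiv.Perm α)} (h : Relation.ReflTransGen HurwitzStep l l')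
    (hl : ∀ t ∈ l, t.IsSwap) : ∀ t ∈ l', t.IsSwap := by
  induction h with
  | refl => exact hl
  | tail _ h ih => exact hstep_swaps h ih

theorem isSwap_eq_swap {t : Equiv.Perm α} (h : t.IsSwap) {x : α} (hx : t x ≠ x) :
    t = Equiv.swap x (t x) := by
  obtain ⟨u, v, huv, rfl⟩ := h
  rcases eq_or_ne x u with rfl | hxu
  · rw [Equiv.swap_apply_left]
  · rcases eq_or_ne x v with rfl | hxv
    · rw [Equiv.swap_apply_right]
      exact Equiv.swap_comm u x
    · exact absurd (Equiv.swap_apply_of_ne_of_ne hxu hxv) hx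

/-- Key lemma: a factorization into swaps can be Hurwitz-moved to start with
`swap x (σ x)` for any non-fixed point `x` of the product `σ`. -/
theorem moveFront : ∀ (l : List (Equiv.Perm α)), (∀ t ∈ l, t.IsSwap) → ∀ (x : α),
    l.prod x ≠ x →
    ∃ r, Relation.ReflTransGen HurwitzStep l (Equiv.swap x (l.prod x) :: r) := by
  intro l
  induction l with
  | nil => intro _ x hx; simp at hx
  | cons t rest IH =>
    intro hsw x hx
    have ht : t.IsSwap := hsw t List.mem_cons_self
    have hrest : ∀ s ∈ rest, s.IsSwap := fun s hs => hsw s (List.mem_cons_of_mem t hs)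
    have hpx : (t :: rest).prod x = t (rest.prod x) := by
      rw [List.prod_cons, Equiv.Perm.mul_apply]
    by_cases htx : t x = x
    · have h1 : rest.prod x ≠ x := fun h => hx (by rw [hpx, h, htx])
      obtain ⟨r, hr⟩ := IH hrest x h1
      refine ⟨t :: r, ?_⟩
      have key : t * Equiv.swap x (rest.prod x) * t⁻¹ = Equiv.swap x ((t :: rest).prod x) := by
        rw [← Equiv.swap_apply_apply, htx, hpx]
      have step : HurwitzStep (t :: Equiv.swap x (rest.prod x) :: r)
          (Equiv.swap x ((t :: rest).prod x) :: t :: r) := by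
        refine ⟨[], t, Equiv.swap x (rest.prod x), r, rfl, Or.inl ?_⟩
        rw [key]; rfl
      exact (rtg_cons t hr).tail step
    · have hts : t = Equiv.swap x (t x) := isSwap_eq_swap ht htx
      by_cases h1 : rest.prod x = x
      · refine ⟨rest, ?_⟩
        have : Equiv.swap x ((t :: rest).prod x) = t := by
          rw [hpx, h1, ← hts]
        rw [this]
      · by_cases h2 : rest.prod x = t x
        · exfalso
          apply hx
          rw [hpx, h2]
          conv_lhs => rw [hts]
          rw [Equiv.swap_apply_left, Equiv.swap_apply_right]
        · have htp : t (rest.prod x) = rest.prod x := by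
            conv_lhs => rw [hts]
            exact Equiv.swap_apply_of_ne_of_ne h1 h2
          obtain ⟨r, hr⟩ := IH hrest x h1
          have hσ : (t :: rest).prod x = rest.prod x := by rw [hpx, htp]
          refine ⟨(Equiv.swap x (rest.prod x))⁻¹ * t * Equiv.swap x (rest.prod x) :: r, ?_⟩
          have step : HurwitzStep (t :: Equiv.swap x (rest.prod x) :: r)
              (Equiv.swap x ((t :: rest).prod x) ::
                ((Equiv.swap x (rest.prod x))⁻¹ * t * Equiv.swap x (rest.prod x)) :: r) := by
            refine ⟨[], t, Equiv.swap x (rest.prod x), r, rfl, Or.inr ?_⟩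
            rw [hσ]; rfl
          exact (rtg_cons t hr).tail step

theorem engine : ∀ (k : ℕ) (σ : Equiv.Perm α) (l l' : List (Equiv.Perm α)),
    l.length = k → l'.length = k →
    (∀ t ∈ l, t.IsSwap) → (∀ t ∈ l', t.IsSwap) →
    l.prod = σ → l'.prod = σ →
    σ.IsCycle → σ.support.card = k + 1 →
    Relation.ReflTransGen HurwitzStep l l' := by
  intro k
  induction k with
  | zero =>
    intro σ l l' h1 h2 _ _ _ _ _ _
    rw [List.length_eq_zero_iff] at h1 h2
    subst h1; subst h2
    exact Relation.ReflTransGen.refl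
  | succ k IH =>
    intro σ l l' h1 h2 hsw hsw' hp hp' hcyc hcard
    obtain ⟨x, hx, -⟩ := id hcyc
    obtain ⟨r, hr⟩ := moveFront l hsw x (by rw [hp]; exact hx)
    obtain ⟨r', hr'⟩ := moveFront l' hsw' x (by rw [hp']; exact hx)
    rw [hp] at hr
    rw [hp'] at hr'
    have hlr : r.length = k := by
      have := rtg_length hr; rw [h1] at this; simpa using this.symm
    have hlr' : r'.length = k := by
      have := rtg_length hr'; rw [h2] at this; simpa using this.symm
    suffices h : Relation.ReflTransGen HurwitzStep (Equiv.swap x (σ x) :: r)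
        (Equiv.swap x (σ x) :: r') from hr.trans (h.trans (rtg_symm hr'))
    rcases Nat.eq_zero_or_pos k with rfl | hk
    · rw [List.length_eq_zero_iff] at hlr hlr'
      rw [hlr, hlr']
    · have hswr : ∀ t ∈ r, t.IsSwap := fun t htm =>
        rtg_swaps hr hsw t (List.mem_cons_of_mem _ htm)
      have hswr' : ∀ t ∈ r', t.IsSwap := fun t htm =>
        rtg_swaps hr' hsw' t (List.mem_cons_of_mem _ htm)
      have hpr : r.prod = Equiv.swap x (σ x) * σ := by
        have h' := rtg_prod hr
        rw [hp, List.prod_cons] at h'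
        calc r.prod = Equiv.swap x (σ x) * (Equiv.swap x (σ x) * r.prod) := by
              rw [← mul_assoc, Equiv.swap_mul_self, one_mul]
          _ = Equiv.swap x (σ x) * σ := by rw [← h']
      have hpr' : r'.prod = Equiv.swap x (σ x) * σ := by
        have h' := rtg_prod hr'
        rw [hp', List.prod_cons] at h'
        calc r'.prod = Equiv.swap x (σ x) * (Equiv.swap x (σ x) * r'.prod) := by
              rw [← mul_assoc, Equiv.swap_mul_self, one_mul]
          _ = Equiv.swap x (σ x) * σ := by rw [← h']
      have hffx : σ (σ x) ≠ x := by
        intro h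
        have hpow : (σ ^ 2) x = x := by
          simp only [pow_two, Equiv.Perm.mul_apply]; exact h
        have h2' : σ ^ 2 = 1 := (hcyc.pow_eq_one_iff' hx).2 hpow
        have hdvd : orderOf σ ∣ 2 := orderOf_dvd_of_pow_eq_one h2'
        rw [hcyc.orderOf, hcard] at hdvd
        have := Nat.le_of_dvd (by norm_num) hdvd
        omega
      have hcyc2 : (Equiv.swap x (σ x) * σ).IsCycle := hcyc.swap_mul hx hffx
      have hcard2 : (Equiv.swap x (σ x) * σ).support.card = k + 1 := by
        rw [Equiv.Perm.support_swap_mul_eq σ x hffx, Finset.sdiff_singleton_eq_erase,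
          Finset.card_erase_of_mem (Equiv.Perm.mem_support.2 hx), hcard]
        omega
      exact rtg_cons _ (IH (Equiv.swap x (σ x) * σ) r r' hlr hlr' hswr hswr' hpr hpr'
        hcyc2 hcard2)

end PermLemmas

/-- Hurwitz transitivity: any two reduced factorizations of an `n`-cycle `c`
into `n-1` transpositions are related by a sequence of Hurwitz moves. -/
theorem hurwitz_transitive (n : ℕ) (hn : 2 ≤ n)
    (c : Equiv.Perm (Fin n)) (hc : c.IsCycle ∧ c.support.card = n)
    (l l' : List (Equiv.Perm (Fin n)))
    (hl : l.length = n - 1 ∧ (∀ t ∈ l, t.IsSwap) ∧ l.prod = c)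
    (hl' : l'.length = n - 1 ∧ (∀ t ∈ l', t.IsSwap) ∧ l'.prod = c) :
    Relation.ReflTransGen HurwitzStep l l' :=
  engine (n - 1) c l l' hl.1 hl'.1 hl.2.1 hl'.2.1 hl.2.2 hl'.2.2 hc.1
    (by rw [hc.2]; omega)
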